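/- Fix an integer n ≥ 2, a rate r > 0, and a survival function t ↦ ₜp_x : [0,∞) → (0,1] which is continuous, strictly decreasing, with ₀p_x = 1 and ₜp_x → 0 as t → ∞. If 0 < γ₂ ≤ 1 ≤ γ₁ with γ₁ ≠ γ₂, then Δ_{n,γ₁}(t) < Δ_{n,γ₂}(t) for every t > 0. -/

import Mathlib

open MeasureTheory Real Finset

/-- `theta n γ p = E[(n/N(p))^{1-γ}]` where `N(p)-1 ~ Bin(n-1,p)`. -/
noncomputable def theta (n : ℕ) (γ p : ℝ) : ℝ :=
  ∑ k ∈ Finset.range n,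
    ((n - 1).choose k : ℝ) * p ^ k * (1 - p) ^ (n - 1 - k) *
      ((n : ℝ) / ((k : ℝ) + 1)) ^ (1 - γ)

/-- `beta n γ p = p * theta n γ p`. -/
noncomputable def beta (n : ℕ) (γ p : ℝ) : ℝ := p * theta n γ p

noncomputable def Bs (n : ℕ) (γ : ℝ) (x : ℝ) : ℝ :=
  ∑ k ∈ Finset.range n, (n.choose (k+1) : ℝ) * x^(k+1) * (1-x)^(n-1-k) * ((k:ℝ)+1)^γ

lemma cast_id1 {n k : ℕ} (hn : 1 ≤ n) :
    (n : ℝ) * ((n-1).choose k : ℝ) = ((k:ℝ)+1) * (n.choose (k+1) : ℝ) := by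
  have h := Nat.add_one_mul_choose_eq (n-1) k
  rw [Nat.sub_add_cancel hn] at h
  have := congrArg (Nat.cast (R := ℝ)) h
  push_cast at this
  linarith

lemma beta_eq_Bs (n : ℕ) (hn : 1 ≤ n) (γ x : ℝ) :
    beta n γ x = Bs n γ x / (n:ℝ)^γ := by
  have hnpos : (0:ℝ) < n := by exact_mod_cast hn
  unfold beta theta Bs
  rw [Finset.mul_sum, Finset.sum_div]
  refine Finset.sum_congr rfl fun k hk => ?_
  have hk1 : (0:ℝ) < (k:ℝ)+1 := by positivity
  have hb : (0:ℝ) < (n:ℝ)/((k:ℝ)+1) := by positivity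
  have h1 : ((n:ℝ)/((k:ℝ)+1)) ^ (1-γ) = ((n:ℝ)/((k:ℝ)+1)) * (((k:ℝ)+1)^γ / (n:ℝ)^γ) := by
    rw [show (1:ℝ)-γ = 1+(-γ) by ring, Real.rpow_add hb, Real.rpow_one,
      Real.rpow_neg hb.le, ← Real.inv_rpow hb.le, inv_div, Real.div_rpow hk1.le hnpos.le]
  rw [h1]
  have h2 : (n:ℝ) * ((n-1).choose k : ℝ) = ((k:ℝ)+1) * (n.choose (k+1) : ℝ) := cast_id1 hn
  have hng : (0:ℝ) < (n:ℝ)^γ := Real.rpow_pos_of_pos hnpos γ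
  field_simp
  linear_combination (x^(k+1) * (1-x)^(n-1-k)) * h2

noncomputable def Bs' (n : ℕ) (γ : ℝ) (x : ℝ) : ℝ :=
  (n:ℝ) * ∑ k ∈ Finset.range n,
    ((n-1).choose k : ℝ) * x^k * (1-x)^(n-1-k) * (((k:ℝ)+1)^γ - (k:ℝ)^γ)

lemma cast_id2 {m j : ℕ} (hj : j < m) :
    ((m:ℝ)+1) * ((m.choose (j+1)) : ℝ) = ((m - j : ℕ) : ℝ) * (((m+1).choose (j+1)) : ℝ) := by
  have h1 := Nat.choose_succ_right_eq m j
  have h2 := Nat.add_one_mul_choose_eq m j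
  have key : (m+1) * (m.choose (j+1)) * (j+1) = ((m+1).choose (j+1)) * (m - j) * (j+1) := by
    calc (m+1) * (m.choose (j+1)) * (j+1) = (m+1) * ((m.choose (j+1)) * (j+1)) := by ring
    _ = (m+1) * ((m.choose j) * (m - j)) := by rw [h1]
    _ = ((m+1) * (m.choose j)) * (m - j) := by ring
    _ = ((m+1).choose (j+1)) * (j+1) * (m - j) := by
          rw [h2]
    _ = ((m+1).choose (j+1)) * (m - j) * (j+1) := by ring
  have key2 : (m+1) * (m.choose (j+1)) = ((m+1).choose (j+1)) * (m - j) :=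
    Nat.eq_of_mul_eq_mul_right (Nat.succ_pos j) key
  have := congrArg (Nat.cast (R := ℝ)) key2
  push_cast at this ⊢
  linarith

lemma hasDerivAt_Bs (n : ℕ) (hn : 1 ≤ n) (γ : ℝ) (hγ : γ ≠ 0) (x : ℝ) :
    HasDerivAt (Bs n γ) (Bs' n γ x) x := by
  obtain ⟨m, rfl⟩ : ∃ m, n = m + 1 := ⟨n-1, (Nat.succ_pred_eq_of_pos hn).symm⟩
  have hterm : ∀ k ∈ Finset.range (m+1), HasDerivAt
      (fun y => ((m+1).choose (k+1) : ℝ) * y^(k+1) * (1-y)^(m+1-1-k) * ((k:ℝ)+1)^γ)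
      ((((m+1).choose (k+1) : ℝ) * (((k+1:ℕ):ℝ) * x^k) * (1-x)^(m-k)
        + ((m+1).choose (k+1) : ℝ) * x^(k+1) * (((m-k:ℕ):ℝ) * (1-x)^(m-k-1) * (-1)))
        * ((k:ℝ)+1)^γ) x := by
    intro k _
    have hin : HasDerivAt (fun y : ℝ => 1 - y) (-1) x := by
      simpa using (hasDerivAt_id x).const_sub 1
    have h2 : HasDerivAt (fun y : ℝ => (1-y)^(m-k)) (((m-k:ℕ):ℝ) * (1-x)^(m-k-1) * (-1)) x := by
      have := (hasDerivAt_pow (m-k) (1-x)).comp x hin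
      exact this
    have h1 : HasDerivAt (fun y : ℝ => ((m+1).choose (k+1) : ℝ) * y^(k+1))
        (((m+1).choose (k+1) : ℝ) * (((k+1:ℕ):ℝ) * x^k)) x := by
      simpa using (hasDerivAt_pow (k+1) x).const_mul (((m+1).choose (k+1) : ℝ))
    have := (h1.mul h2).mul_const (((k:ℝ)+1)^γ)
    simpa [Nat.add_sub_cancel] using this
  have hsum := HasDerivAt.fun_sum hterm
  have halg : (∑ k ∈ Finset.range (m+1),
      ((((m+1).choose (k+1) : ℝ)) * (((k+1:ℕ):ℝ) * x^k) * (1-x)^(m-k)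
        + ((m+1).choose (k+1) : ℝ) * x^(k+1) * (((m-k:ℕ):ℝ) * (1-x)^(m-k-1) * (-1)))
        * ((k:ℝ)+1)^γ) = Bs' (m+1) γ x := by
    unfold Bs'
    have e1 : ∀ k ∈ Finset.range (m+1),
        ((((m+1).choose (k+1) : ℝ)) * (((k+1:ℕ):ℝ) * x^k) * (1-x)^(m-k)
          + ((m+1).choose (k+1) : ℝ) * x^(k+1) * (((m-k:ℕ):ℝ) * (1-x)^(m-k-1) * (-1)))
          * ((k:ℝ)+1)^γ
        = (((m+1:ℕ):ℝ) * ((m.choose k):ℝ) * x^k * (1-x)^(m-k) * ((k:ℝ)+1)^γ)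
          - (((m+1).choose (k+1) : ℝ) * x^(k+1) * ((m-k:ℕ):ℝ) * (1-x)^(m-k-1) * ((k:ℝ)+1)^γ) := by
      intro k _
      have hc := cast_id1 (n := m+1) (k := k) (by omega)
      simp only [Nat.add_sub_cancel] at hc
      push_cast at hc ⊢
      linear_combination (-(x^k * (1-x)^(m-k) * ((k:ℝ)+1)^γ)) * hc
    rw [Finset.sum_congr rfl e1, Finset.sum_sub_distrib, Finset.mul_sum]
    have e2 : ∀ k ∈ Finset.range (m+1),
        ((m+1:ℕ):ℝ) * ((((m+1)-1).choose k : ℝ) * x^k * (1-x)^((m+1)-1-k) * (((k:ℝ)+1)^γ - (k:ℝ)^γ))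
        = (((m+1:ℕ):ℝ) * ((m.choose k):ℝ) * x^k * (1-x)^(m-k) * ((k:ℝ)+1)^γ)
          - (((m+1:ℕ):ℝ) * (((m.choose k):ℝ) * x^k * (1-x)^(m-k) * ((k:ℕ):ℝ)^γ)) := by
      intro k _
      simp only [Nat.add_sub_cancel]
      push_cast
      ring
    rw [Finset.sum_congr rfl e2, Finset.sum_sub_distrib]
    congr 1
    rw [Finset.sum_range_succ, Finset.sum_range_succ']
    simp only [Nat.sub_self, Nat.cast_zero, CharP.cast_eq_zero,
      Real.zero_rpow hγ, mul_zero, zero_mul, add_zero]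
    refine Finset.sum_congr rfl fun j hj => ?_
    have hjm : j < m := Finset.mem_range.mp hj
    have hc := cast_id2 hjm
    have hsub : m - j - 1 = m - (j+1) := by omega
    rw [hsub]
    push_cast [Nat.cast_sub hjm.le, Nat.cast_sub (by omega : j + 1 ≤ m)] at hc ⊢
    linear_combination (-(x^(j+1) * (1-x)^(m-(j+1)) * ((j:ℝ)+1)^γ)) * hc
  rw [← halg]
  exact hsum

lemma sum_binom (n : ℕ) (x : ℝ) :
    ∑ k ∈ Finset.range n, (n.choose (k+1) : ℝ) * x^(k+1) * (1-x)^(n-1-k) = 1 - (1-x)^n := by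
  have h : (1:ℝ) = ∑ k ∈ Finset.range (n+1), x^k * (1-x)^(n-k) * (n.choose k : ℝ) := by
    have h0 := add_pow x (1-x) n
    rw [show x + (1-x) = 1 by ring, one_pow] at h0
    exact h0
  rw [Finset.sum_range_succ'] at h
  simp only [pow_zero, Nat.sub_zero, Nat.choose_zero_right, Nat.cast_one, one_mul, mul_one] at h
  have h2 : ∑ k ∈ Finset.range n, x^(k+1) * (1-x)^(n-(k+1)) * (n.choose (k+1) : ℝ)
      = ∑ k ∈ Finset.range n, (n.choose (k+1) : ℝ) * x^(k+1) * (1-x)^(n-1-k) := by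
    refine Finset.sum_congr rfl fun k hk => ?_
    have : n - (k+1) = n - 1 - k := by omega
    rw [this]; ring
  rw [h2] at h
  linarith

lemma Bs_pos (n : ℕ) (hn : 1 ≤ n) (γ : ℝ) {x : ℝ} (hx : 0 < x) (hx1 : x ≤ 1) :
    0 < Bs n γ x := by
  have hq : (0:ℝ) ≤ 1 - x := by linarith
  unfold Bs
  apply Finset.sum_pos'
  · intro k hk
    have h1 : (0:ℝ) ≤ (n.choose (k+1) : ℝ) := Nat.cast_nonneg _
    have h2 : (0:ℝ) ≤ x^(k+1) := by positivity
    have h4 : (0:ℝ) < ((k:ℝ)+1)^γ := Real.rpow_pos_of_pos (by positivity) γ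
    have h3 : (0:ℝ) ≤ (1-x)^(n-1-k) := pow_nonneg hq _
    exact mul_nonneg (mul_nonneg (mul_nonneg h1 h2) h3) h4.le
  · refine ⟨n-1, Finset.mem_range.mpr (by omega), ?_⟩
    have h1 : n - 1 + 1 = n := by omega
    have h2 : n - 1 - (n-1) = 0 := by omega
    rw [h1, h2, Nat.choose_self, pow_zero]
    have : (0:ℝ) < (((n-1:ℕ):ℝ)+1)^γ := Real.rpow_pos_of_pos (by positivity) γ
    have hxp : (0:ℝ) < x^n := pow_pos hx n
    simp only [Nat.cast_one]
    nlinarith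

lemma Bs_le (n : ℕ) (hn : 1 ≤ n) {γ : ℝ} (hγ : 0 ≤ γ) {x : ℝ} (hx : 0 ≤ x) (hx1 : x ≤ 1) :
    Bs n γ x ≤ (n:ℝ)^γ := by
  have hq : (0:ℝ) ≤ 1 - x := by linarith
  have hng : (0:ℝ) ≤ (n:ℝ)^γ := Real.rpow_nonneg (by positivity) γ
  have h1 : Bs n γ x ≤ ∑ k ∈ Finset.range n,
      (n.choose (k+1) : ℝ) * x^(k+1) * (1-x)^(n-1-k) * (n:ℝ)^γ := by
    apply Finset.sum_le_sum
    intro k hk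
    have hkn : (k:ℝ)+1 ≤ (n:ℝ) := by
      have := Finset.mem_range.mp hk
      exact_mod_cast Nat.succ_le_of_lt this
    have hw : ((k:ℝ)+1)^γ ≤ (n:ℝ)^γ := Real.rpow_le_rpow (by positivity) hkn hγ
    have hnn : (0:ℝ) ≤ (n.choose (k+1) : ℝ) * x^(k+1) * (1-x)^(n-1-k) := by positivity
    exact mul_le_mul_of_nonneg_left hw hnn
  rw [← Finset.sum_mul, sum_binom] at h1
  have h2 : (1 - (1-x)^n) ≤ 1 := by
    have : (0:ℝ) ≤ (1-x)^n := pow_nonneg hq n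
    linarith
  nlinarith

lemma beta_one (n : ℕ) (hn : 1 ≤ n) (x : ℝ) : beta n 1 x = x := by
  unfold beta theta
  have e : ∀ k ∈ Finset.range n,
      ((n-1).choose k : ℝ) * x^k * (1-x)^(n-1-k) * ((n:ℝ)/((k:ℝ)+1))^(1-(1:ℝ))
      = x^k * (1-x)^(n-1-k) * ((n-1).choose k : ℝ) := by
    intro k _
    rw [sub_self, Real.rpow_zero]
    ring
  rw [Finset.sum_congr rfl e]
  obtain ⟨m, rfl⟩ : ∃ m, n = m + 1 := ⟨n-1, (Nat.succ_pred_eq_of_pos hn).symm⟩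
  simp only [Nat.add_sub_cancel]
  have h0 := add_pow x (1-x) m
  rw [show x + (1-x) = 1 by ring, one_pow] at h0
  rw [← h0, mul_one]

lemma ptwise_gt {γ : ℝ} (hγ : 1 < γ) (k : ℕ) :
    ((k:ℝ)+1)^γ - (k:ℝ)^γ < γ * ((k:ℝ)+1)^(γ-1) := by
  have ha : (0:ℝ) ≤ (k:ℝ) := Nat.cast_nonneg k
  have hab : (k:ℝ) < (k:ℝ) + 1 := by linarith
  have hcont : ContinuousOn (fun y : ℝ => y ^ γ) (Set.Icc (k:ℝ) ((k:ℝ)+1)) := by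
    intro y _
    exact (Real.continuousAt_rpow_const y γ (Or.inr (by linarith))).continuousWithinAt
  have hderiv : ∀ y ∈ Set.Ioo (k:ℝ) ((k:ℝ)+1), HasDerivAt (fun y : ℝ => y ^ γ) (γ * y ^ (γ-1)) y := by
    intro y hy
    exact Real.hasDerivAt_rpow_const (Or.inr hγ.le)
  obtain ⟨c, hc, hceq⟩ := exists_hasDerivAt_eq_slope (fun y : ℝ => y^γ) _ hab hcont hderiv
  rw [show ((k:ℝ)+1) - (k:ℝ) = 1 by ring, div_one] at hceq
  have hlt : c ^ (γ-1) < ((k:ℝ)+1)^(γ-1) :=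
    Real.rpow_lt_rpow (le_trans ha hc.1.le) hc.2 (by linarith)
  calc ((k:ℝ)+1)^γ - (k:ℝ)^γ = γ * c^(γ-1) := hceq.symm
  _ < γ * ((k:ℝ)+1)^(γ-1) := by nlinarith

lemma ptwise_lt {γ : ℝ} (hγ0 : 0 < γ) (hγ : γ < 1) (k : ℕ) :
    γ * ((k:ℝ)+1)^(γ-1) < ((k:ℝ)+1)^γ - (k:ℝ)^γ := by
  cases k with
  | zero =>
    simp only [Nat.cast_zero, zero_add, Real.one_rpow, Real.zero_rpow hγ0.ne', mul_one]
    linarith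
  | succ j =>
    set a : ℝ := ((j:ℕ):ℝ) + 1 with ha_def
    have ha : (0:ℝ) < a := by positivity
    have hab : a < a + 1 := by linarith
    have hcont : ContinuousOn (fun y : ℝ => y ^ γ) (Set.Icc a (a+1)) := by
      intro y hy
      exact (Real.continuousAt_rpow_const y γ (Or.inl (by nlinarith [hy.1] : y ≠ 0))).continuousWithinAt
    have hderiv : ∀ y ∈ Set.Ioo a (a+1), HasDerivAt (fun y : ℝ => y ^ γ) (γ * y ^ (γ-1)) y := by
      intro y hy
      exact Real.hasDerivAt_rpow_const (Or.inl (by nlinarith [hy.1] : y ≠ 0))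
    obtain ⟨c, hc, hceq⟩ := exists_hasDerivAt_eq_slope (fun y : ℝ => y^γ) _ hab hcont hderiv
    rw [show (a+1) - a = 1 by ring, div_one] at hceq
    have hlt : (a+1) ^ (γ-1) < c^(γ-1) :=
      Real.rpow_lt_rpow_of_neg (lt_trans ha hc.1) hc.2 (by linarith)
    have hcast : ((Nat.succ j : ℕ):ℝ) = a := by push_cast [ha_def]; ring
    rw [hcast]
    calc γ * (a+1)^(γ-1) < γ * c^(γ-1) := by nlinarith
    _ = (a+1)^γ - a^γ := hceq

lemma Bs_repr (n : ℕ) (hn : 1 ≤ n) (γ x : ℝ) :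
    Bs n γ x = (n:ℝ) * x * ∑ k ∈ Finset.range n,
      ((n-1).choose k : ℝ) * x^k * (1-x)^(n-1-k) * ((k:ℝ)+1)^(γ-1) := by
  unfold Bs
  rw [Finset.mul_sum]
  refine Finset.sum_congr rfl fun k hk => ?_
  have hc := cast_id1 (n := n) (k := k) hn
  have hk1 : (0:ℝ) < (k:ℝ)+1 := by positivity
  have hr : ((k:ℝ)+1)^γ = ((k:ℝ)+1)^(γ-1) * ((k:ℝ)+1) := by
    rw [Real.rpow_sub hk1, Real.rpow_one, div_mul_cancel₀ _ hk1.ne']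
  rw [hr]
  linear_combination (-(x^(k+1) * (1-x)^(n-1-k) * ((k:ℝ)+1)^(γ-1))) * hc

lemma key_gt (n : ℕ) (hn : 2 ≤ n) {γ x : ℝ} (hγ : 1 < γ) (hx : 0 < x) (hx1 : x < 1) :
    x * Bs' n γ x < γ * Bs n γ x := by
  have hn1 : 1 ≤ n := by omega
  have hq : (0:ℝ) < 1 - x := by linarith
  have hnx : (0:ℝ) < (n:ℝ) * x := by
    have : (0:ℝ) < (n:ℝ) := by exact_mod_cast (by omega : 0 < n)
    positivity
  have hsum : (∑ k ∈ Finset.range n,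
        ((n-1).choose k : ℝ) * x^k * (1-x)^(n-1-k) * (((k:ℝ)+1)^γ - (k:ℝ)^γ))
      < ∑ k ∈ Finset.range n,
        ((n-1).choose k : ℝ) * x^k * (1-x)^(n-1-k) * (γ * ((k:ℝ)+1)^(γ-1)) := by
    apply Finset.sum_lt_sum_of_nonempty (Finset.nonempty_range_iff.mpr (by omega))
    intro k hk
    have hkn : k ≤ n - 1 := by have := Finset.mem_range.mp hk; omega
    have hd : (0:ℝ) < ((n-1).choose k : ℝ) := by exact_mod_cast Nat.choose_pos hkn
    have hbase : (0:ℝ) < ((n-1).choose k : ℝ) * x^k * (1-x)^(n-1-k) :=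
      mul_pos (mul_pos hd (pow_pos hx k)) (pow_pos hq _)
    exact mul_lt_mul_of_pos_left (ptwise_gt hγ k) hbase
  have hfac : (∑ k ∈ Finset.range n,
        ((n-1).choose k : ℝ) * x^k * (1-x)^(n-1-k) * (γ * ((k:ℝ)+1)^(γ-1)))
      = γ * ∑ k ∈ Finset.range n,
        ((n-1).choose k : ℝ) * x^k * (1-x)^(n-1-k) * ((k:ℝ)+1)^(γ-1) := by
    rw [Finset.mul_sum]
    exact Finset.sum_congr rfl fun k _ => by ring
  rw [hfac] at hsum
  rw [Bs_repr n hn1 γ x]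
  unfold Bs'
  calc x * ((n:ℝ) * ∑ k ∈ Finset.range n,
        ((n-1).choose k : ℝ) * x^k * (1-x)^(n-1-k) * (((k:ℝ)+1)^γ - (k:ℝ)^γ))
      = ((n:ℝ) * x) * ∑ k ∈ Finset.range n,
        ((n-1).choose k : ℝ) * x^k * (1-x)^(n-1-k) * (((k:ℝ)+1)^γ - (k:ℝ)^γ) := by ring
    _ < ((n:ℝ) * x) * (γ * ∑ k ∈ Finset.range n,
        ((n-1).choose k : ℝ) * x^k * (1-x)^(n-1-k) * ((k:ℝ)+1)^(γ-1)) :=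
        mul_lt_mul_of_pos_left hsum hnx
    _ = γ * ((n:ℝ) * x * ∑ k ∈ Finset.range n,
        ((n-1).choose k : ℝ) * x^k * (1-x)^(n-1-k) * ((k:ℝ)+1)^(γ-1)) := by ring

lemma key_lt (n : ℕ) (hn : 2 ≤ n) {γ x : ℝ} (hγ0 : 0 < γ) (hγ : γ < 1) (hx : 0 < x) (hx1 : x < 1) :
    γ * Bs n γ x < x * Bs' n γ x := by
  have hn1 : 1 ≤ n := by omega
  have hq : (0:ℝ) < 1 - x := by linarith
  have hnx : (0:ℝ) < (n:ℝ) * x := by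
    have : (0:ℝ) < (n:ℝ) := by exact_mod_cast (by omega : 0 < n)
    positivity
  have hsum : (∑ k ∈ Finset.range n,
        ((n-1).choose k : ℝ) * x^k * (1-x)^(n-1-k) * (γ * ((k:ℝ)+1)^(γ-1)))
      < ∑ k ∈ Finset.range n,
        ((n-1).choose k : ℝ) * x^k * (1-x)^(n-1-k) * (((k:ℝ)+1)^γ - (k:ℝ)^γ) := by
    apply Finset.sum_lt_sum_of_nonempty (Finset.nonempty_range_iff.mpr (by omega))
    intro k hk
    have hkn : k ≤ n - 1 := by have := Finset.mem_range.mp hk; omega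
    have hd : (0:ℝ) < ((n-1).choose k : ℝ) := by exact_mod_cast Nat.choose_pos hkn
    have hbase : (0:ℝ) < ((n-1).choose k : ℝ) * x^k * (1-x)^(n-1-k) :=
      mul_pos (mul_pos hd (pow_pos hx k)) (pow_pos hq _)
    exact mul_lt_mul_of_pos_left (ptwise_lt hγ0 hγ k) hbase
  have hfac : (∑ k ∈ Finset.range n,
        ((n-1).choose k : ℝ) * x^k * (1-x)^(n-1-k) * (γ * ((k:ℝ)+1)^(γ-1)))
      = γ * ∑ k ∈ Finset.range n,
        ((n-1).choose k : ℝ) * x^k * (1-x)^(n-1-k) * ((k:ℝ)+1)^(γ-1) := by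
    rw [Finset.mul_sum]
    exact Finset.sum_congr rfl fun k _ => by ring
  rw [hfac] at hsum
  rw [Bs_repr n hn1 γ x]
  unfold Bs'
  calc γ * ((n:ℝ) * x * ∑ k ∈ Finset.range n,
        ((n-1).choose k : ℝ) * x^k * (1-x)^(n-1-k) * ((k:ℝ)+1)^(γ-1))
      = ((n:ℝ) * x) * (γ * ∑ k ∈ Finset.range n,
        ((n-1).choose k : ℝ) * x^k * (1-x)^(n-1-k) * ((k:ℝ)+1)^(γ-1)) := by ring
    _ < ((n:ℝ) * x) * ∑ k ∈ Finset.range n,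
        ((n-1).choose k : ℝ) * x^k * (1-x)^(n-1-k) * (((k:ℝ)+1)^γ - (k:ℝ)^γ) :=
        mul_lt_mul_of_pos_left hsum hnx
    _ = x * ((n:ℝ) * ∑ k ∈ Finset.range n,
        ((n-1).choose k : ℝ) * x^k * (1-x)^(n-1-k) * (((k:ℝ)+1)^γ - (k:ℝ)^γ)) := by ring

noncomputable def Gf (n : ℕ) (γ : ℝ) (x : ℝ) : ℝ := (1/γ) * Real.log (beta n γ x) - Real.log x

lemma beta_pos (n : ℕ) (hn : 1 ≤ n) (γ : ℝ) {x : ℝ} (hx : 0 < x) (hx1 : x ≤ 1) :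
    0 < beta n γ x := by
  rw [beta_eq_Bs n hn]
  exact div_pos (Bs_pos n hn γ hx hx1)
    (Real.rpow_pos_of_pos (by exact_mod_cast (by omega : 0 < n)) γ)

lemma beta_le_one (n : ℕ) (hn : 1 ≤ n) {γ : ℝ} (hγ : 0 ≤ γ) {x : ℝ} (hx : 0 ≤ x) (hx1 : x ≤ 1) :
    beta n γ x ≤ 1 := by
  rw [beta_eq_Bs n hn,
    div_le_one (Real.rpow_pos_of_pos (by exact_mod_cast (by omega : 0 < n)) γ)]
  exact Bs_le n hn hγ hx hx1

lemma hasDerivAt_beta (n : ℕ) (hn : 1 ≤ n) (γ : ℝ) (hγ : γ ≠ 0) (x : ℝ) :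
    HasDerivAt (beta n γ) (Bs' n γ x / (n:ℝ)^γ) x := by
  have h := (hasDerivAt_Bs n hn γ hγ x).div_const ((n:ℝ)^γ)
  have he : (fun y => Bs n γ y / (n:ℝ)^γ) = beta n γ :=
    funext fun y => (beta_eq_Bs n hn γ y).symm
  rwa [he] at h

lemma hasDerivAt_Gf (n : ℕ) (hn : 1 ≤ n) {γ : ℝ} (hγ : 0 < γ) {x : ℝ} (hx : 0 < x) (hx1 : x ≤ 1) :
    HasDerivAt (Gf n γ) ((1/γ) * (Bs' n γ x / Bs n γ x) - 1/x) x := by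
  have hb : 0 < beta n γ x := beta_pos n hn γ hx hx1
  have hBpos : 0 < Bs n γ x := Bs_pos n hn γ hx hx1
  have hnγ : (0:ℝ) < (n:ℝ)^γ := Real.rpow_pos_of_pos (by exact_mod_cast (by omega : 0 < n)) γ
  have h1 : HasDerivAt (fun y => Real.log (beta n γ y)) (Bs' n γ x / (n:ℝ)^γ / beta n γ x) x :=
    (hasDerivAt_beta n hn γ hγ.ne' x).log hb.ne'
  have h2 := (h1.const_mul (1/γ)).fun_sub (Real.hasDerivAt_log hx.ne')
  have e : (1/γ) * (Bs' n γ x / Bs n γ x) - 1/x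
      = 1/γ * (Bs' n γ x / (n:ℝ)^γ / beta n γ x) - x⁻¹ := by
    rw [beta_eq_Bs n hn]
    field_simp
  rw [e]
  exact h2

lemma Gf_anti (n : ℕ) (hn : 2 ≤ n) {γ : ℝ} (hγ : 1 < γ) :
    StrictAntiOn (Gf n γ) (Set.Ioo 0 1) := by
  have hγ0 : (0:ℝ) < γ := by linarith
  apply strictAntiOn_of_deriv_neg (convex_Ioo 0 1)
  · intro x hx
    exact (hasDerivAt_Gf n (by omega) hγ0 hx.1 hx.2.le).continuousAt.continuousWithinAt
  · intro x hx
    rw [interior_Ioo] at hx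
    rw [(hasDerivAt_Gf n (by omega) hγ0 hx.1 hx.2.le).deriv]
    have hkey := key_gt n hn hγ hx.1 hx.2
    have hB := Bs_pos n (by omega) γ hx.1 hx.2.le
    have e1 : (1/γ) * (Bs' n γ x / Bs n γ x) = Bs' n γ x / (γ * Bs n γ x) := by
      field_simp
    rw [e1, sub_neg, div_lt_div_iff₀ (by positivity) hx.1]
    nlinarith
  -- done

lemma Gf_mono (n : ℕ) (hn : 2 ≤ n) {γ : ℝ} (hγ0 : 0 < γ) (hγ : γ < 1) :
    StrictMonoOn (Gf n γ) (Set.Ioo 0 1) := by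
  apply strictMonoOn_of_deriv_pos (convex_Ioo 0 1)
  · intro x hx
    exact (hasDerivAt_Gf n (by omega) hγ0 hx.1 hx.2.le).continuousAt.continuousWithinAt
  · intro x hx
    rw [interior_Ioo] at hx
    rw [(hasDerivAt_Gf n (by omega) hγ0 hx.1 hx.2.le).deriv]
    have hkey := key_lt n hn hγ0 hγ hx.1 hx.2
    have hB := Bs_pos n (by omega) γ hx.1 hx.2.le
    have e1 : (1/γ) * (Bs' n γ x / Bs n γ x) = Bs' n γ x / (γ * Bs n γ x) := by
      field_simp
    rw [e1, sub_pos, div_lt_div_iff₀ hx.1 (by positivity)]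
    nlinarith

lemma Gf_one (n : ℕ) (hn : 1 ≤ n) {x : ℝ} (hx : 0 < x) : Gf n 1 x = 0 := by
  unfold Gf
  rw [beta_one n hn x]
  simp

lemma cross (n : ℕ) (hn : 2 ≤ n) (γ₁ γ₂ : ℝ) (hγ₂ : 0 < γ₂) (hγ₂1 : γ₂ ≤ 1) (hγ₁ : 1 ≤ γ₁)
    (hne : γ₁ ≠ γ₂) {x y : ℝ} (hy : 0 < y) (hyx : y < x) (hx1 : x < 1) :
    beta n γ₁ x ^ (1/γ₁) * beta n γ₂ y ^ (1/γ₂)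
      < beta n γ₁ y ^ (1/γ₁) * beta n γ₂ x ^ (1/γ₂) := by
  have hγ₁0 : (0:ℝ) < γ₁ := by linarith
  have hxm : x ∈ Set.Ioo (0:ℝ) 1 := ⟨lt_trans hy hyx, hx1⟩
  have hym : y ∈ Set.Ioo (0:ℝ) 1 := ⟨hy, lt_trans hyx hx1⟩
  have hG : Gf n γ₁ x - Gf n γ₂ x < Gf n γ₁ y - Gf n γ₂ y := by
    rcases eq_or_lt_of_le hγ₁ with h1 | h1
    · have hγ₂lt : γ₂ < 1 := lt_of_le_of_ne hγ₂1 (fun h => hne (h1.symm.trans h.symm))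
      have hz1 := Gf_one n (by omega) hxm.1
      have hz2 := Gf_one n (by omega) hym.1
      have hmono := (Gf_mono n hn hγ₂ hγ₂lt) hym hxm hyx
      rw [← h1] at *
      linarith
    · have h2 : Gf n γ₁ x < Gf n γ₁ y := (Gf_anti n hn h1) hym hxm hyx
      have h3 : Gf n γ₂ y ≤ Gf n γ₂ x := by
        rcases eq_or_lt_of_le hγ₂1 with h4 | h4
        · rw [h4, Gf_one n (by omega) hxm.1, Gf_one n (by omega) hym.1]
        · exact ((Gf_mono n hn hγ₂ h4) hym hxm hyx).le
      linarith
  have hb1x := beta_pos n (by omega) γ₁ hxm.1 hxm.2.le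
  have hb1y := beta_pos n (by omega) γ₁ hym.1 hym.2.le
  have hb2x := beta_pos n (by omega) γ₂ hxm.1 hxm.2.le
  have hb2y := beta_pos n (by omega) γ₂ hym.1 hym.2.le
  have hlog : Real.log (beta n γ₁ x ^ (1/γ₁) * beta n γ₂ y ^ (1/γ₂))
      < Real.log (beta n γ₁ y ^ (1/γ₁) * beta n γ₂ x ^ (1/γ₂)) := by
    rw [Real.log_mul (Real.rpow_pos_of_pos hb1x _).ne' (Real.rpow_pos_of_pos hb2y _).ne',
      Real.log_mul (Real.rpow_pos_of_pos hb1y _).ne' (Real.rpow_pos_of_pos hb2x _).ne',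
      Real.log_rpow hb1x, Real.log_rpow hb2y, Real.log_rpow hb1y, Real.log_rpow hb2x]
    unfold Gf at hG
    linarith
  exact (Real.log_lt_log_iff (by positivity) (by positivity)).mp hlog

lemma beta_cont (n : ℕ) (γ : ℝ) : Continuous (beta n γ) := by
  unfold beta theta
  exact continuous_id.mul (continuous_finset_sum _ fun k _ =>
    ((continuous_const.mul (continuous_pow k)).mul
      ((continuous_const.sub continuous_id).pow _)).mul continuous_const)

lemma g_contOn (n : ℕ) (hn : 1 ≤ n) (γ r : ℝ) (p : ℝ → ℝ) (hcont : Continuous p)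
    (hmem : ∀ t, 0 ≤ t → p t ∈ Set.Ioc (0 : ℝ) 1) :
    ContinuousOn (fun s => Real.exp (-r * s) * beta n γ (p s) ^ (1/γ)) (Set.Ici 0) := by
  intro s hs
  apply ContinuousAt.continuousWithinAt
  apply ContinuousAt.mul
  · exact (Real.continuous_exp.comp (continuous_const.mul continuous_id)).continuousAt
  · apply ContinuousAt.rpow_const
    · exact ((beta_cont n γ).comp hcont).continuousAt
    · left
      exact (beta_pos n hn γ (hmem s hs).1 (hmem s hs).2).ne'

lemma g_intOn (n : ℕ) (hn : 1 ≤ n) {γ : ℝ} (hγ0 : 0 < γ) {r : ℝ} (hr : 0 < r)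
    (p : ℝ → ℝ) (hcont : Continuous p) (hmem : ∀ t, 0 ≤ t → p t ∈ Set.Ioc (0 : ℝ) 1) :
    IntegrableOn (fun s => Real.exp (-r * s) * beta n γ (p s) ^ (1/γ)) (Set.Ioi 0) := by
  apply Integrable.mono' (exp_neg_integrableOn_Ioi 0 hr)
  · exact ((g_contOn n hn γ r p hcont hmem).mono Set.Ioi_subset_Ici_self).aestronglyMeasurable
      measurableSet_Ioi
  · refine (ae_restrict_iff' measurableSet_Ioi).mpr (Filter.Eventually.of_forall fun s hs => ?_)
    have hs0 : (0:ℝ) ≤ s := (le_of_lt hs)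
    have hb0 := beta_pos n hn γ (hmem s hs0).1 (hmem s hs0).2
    have hb1 := beta_le_one n hn hγ0.le (hmem s hs0).1.le (hmem s hs0).2
    have hle : beta n γ (p s) ^ (1/γ) ≤ 1 := Real.rpow_le_one hb0.le hb1 (by positivity)
    have hpos : (0:ℝ) ≤ Real.exp (-r * s) * beta n γ (p s) ^ (1/γ) := by positivity
    rw [Real.norm_eq_abs, abs_of_nonneg hpos]
    exact mul_le_of_le_one_right (Real.exp_pos _).le hle

lemma g_pos (n : ℕ) (hn : 1 ≤ n) (γ r : ℝ)
    (p : ℝ → ℝ) (hmem : ∀ t, 0 ≤ t → p t ∈ Set.Ioc (0 : ℝ) 1) {s : ℝ} (hs : 0 ≤ s) :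
    0 < Real.exp (-r * s) * beta n γ (p s) ^ (1/γ) := by
  have hb0 := beta_pos n hn γ (hmem s hs).1 (hmem s hs).2
  positivity

lemma intOn_pos (t : ℝ) {g : ℝ → ℝ} (hint : IntegrableOn g (Set.Ioi t))
    (hpos : ∀ s ∈ Set.Ioi t, 0 < g s) : 0 < ∫ s in Set.Ioi t, g s := by
  rw [setIntegral_pos_iff_support_of_nonneg_ae
    ((ae_restrict_iff' measurableSet_Ioi).mpr
      (Filter.Eventually.of_forall fun s hs => (hpos s hs).le)) hint]
  have hsub : Set.Ioi t ⊆ Function.support g ∩ Set.Ioi t :=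
    fun s hs => ⟨(hpos s hs).ne', hs⟩
  calc (0:ENNReal) < volume (Set.Ioi t) := by rw [Real.volume_Ioi]; exact ENNReal.zero_lt_top
  _ ≤ volume (Function.support g ∩ Set.Ioi t) := measure_mono hsub

/-- Optimal tontine payout function. -/
noncomputable def Dopt (n : ℕ) (γ r : ℝ) (p : ℝ → ℝ) (t : ℝ) : ℝ :=
  beta n γ (p t) ^ (1 / γ) /
    ∫ s in Set.Ioi (0 : ℝ), Real.exp (-r * s) * beta n γ (p s) ^ (1 / γ)

/-- Cumulative discounted payout of the optimal tontine. -/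
noncomputable def Delta (n : ℕ) (γ r : ℝ) (p : ℝ → ℝ) (t : ℝ) : ℝ :=
  ∫ s in (0 : ℝ)..t, Real.exp (-r * s) * Dopt n γ r p s

lemma Delta_eq (n : ℕ) (γ r : ℝ) (p : ℝ → ℝ) {t : ℝ} (ht : 0 ≤ t) :
    Delta n γ r p t
      = (∫ s in Set.Ioc (0:ℝ) t, Real.exp (-r * s) * beta n γ (p s) ^ (1/γ)) /
        (∫ s in Set.Ioi (0:ℝ), Real.exp (-r * s) * beta n γ (p s) ^ (1/γ)) := by
  unfold Delta Dopt
  have he : ∀ s : ℝ, Real.exp (-r * s) * (beta n γ (p s) ^ (1/γ) /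
      (∫ u in Set.Ioi (0:ℝ), Real.exp (-r * u) * beta n γ (p u) ^ (1/γ)))
      = (Real.exp (-r * s) * beta n γ (p s) ^ (1/γ)) /
        (∫ u in Set.Ioi (0:ℝ), Real.exp (-r * u) * beta n γ (p u) ^ (1/γ)) := fun s => by
    ring
  rw [intervalIntegral.integral_congr (fun s _ => he s), intervalIntegral.integral_div,
    intervalIntegral.integral_of_le ht]


set_option maxHeartbeats 2000000 in
/-- if `0 < γ₂ ≤ 1 ≤ γ₁` and `γ₁ ≠ γ₂`, then `Δ_{n,γ₁}(t) < Δ_{n,γ₂}(t)`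
for every `t > 0`. -/
theorem depletion_across_one
    (n : ℕ) (hn : 2 ≤ n) (γ₁ γ₂ : ℝ) (hγ₂ : 0 < γ₂) (hγ₂1 : γ₂ ≤ 1) (hγ₁ : 1 ≤ γ₁)
    (hne : γ₁ ≠ γ₂)
    (r : ℝ) (hr : 0 < r)
    (p : ℝ → ℝ) (hcont : Continuous p) (hanti : StrictAntiOn p (Set.Ici 0))
    (hmem : ∀ t, 0 ≤ t → p t ∈ Set.Ioc (0 : ℝ) 1) (hp0 : p 0 = 1)
    (hlim : Filter.Tendsto p Filter.atTop (nhds 0)) :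
    ∀ t > 0, Delta n γ₁ r p t < Delta n γ₂ r p t := by
  intro t ht
  have hn1 : 1 ≤ n := by omega
  have hγ₁0 : (0:ℝ) < γ₁ := by linarith
  have ht0 : (0:ℝ) ≤ t := ht.le
  have hpt := hmem t ht0
  have hpt1 : p t < 1 := by
    have := hanti (Set.self_mem_Ici) (Set.mem_Ici.mpr ht0) ht
    rwa [hp0] at this
  set c₁ := beta n γ₁ (p t) ^ (1/γ₁) with hc1def
  set c₂ := beta n γ₂ (p t) ^ (1/γ₂) with hc2def
  have hc1 : 0 < c₁ := Real.rpow_pos_of_pos (beta_pos n hn1 γ₁ hpt.1 hpt.2) _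
  have hc2 : 0 < c₂ := Real.rpow_pos_of_pos (beta_pos n hn1 γ₂ hpt.1 hpt.2) _
  -- integrability facts
  have hint1 := g_intOn n hn1 hγ₁0 hr p hcont hmem
  have hint2 := g_intOn n hn1 hγ₂ hr p hcont hmem
  have hint1t : IntegrableOn (fun s => Real.exp (-r * s) * beta n γ₁ (p s) ^ (1/γ₁))
      (Set.Ioi t) := hint1.mono_set (Set.Ioi_subset_Ioi ht0)
  have hint2t : IntegrableOn (fun s => Real.exp (-r * s) * beta n γ₂ (p s) ^ (1/γ₂))
      (Set.Ioi t) := hint2.mono_set (Set.Ioi_subset_Ioi ht0)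
  have hint1c : IntegrableOn (fun s => Real.exp (-r * s) * beta n γ₁ (p s) ^ (1/γ₁))
      (Set.Ioc 0 t) := hint1.mono_set Set.Ioc_subset_Ioi_self
  have hint2c : IntegrableOn (fun s => Real.exp (-r * s) * beta n γ₂ (p s) ^ (1/γ₂))
      (Set.Ioc 0 t) := hint2.mono_set Set.Ioc_subset_Ioi_self
  have hii1 : IntervalIntegrable (fun s => Real.exp (-r * s) * beta n γ₁ (p s) ^ (1/γ₁))
      volume 0 t := by
    apply ContinuousOn.intervalIntegrable
    apply (g_contOn n hn1 γ₁ r p hcont hmem).mono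
    rw [Set.uIcc_of_le ht0]
    exact fun s hs => hs.1
  have hii2 : IntervalIntegrable (fun s => Real.exp (-r * s) * beta n γ₂ (p s) ^ (1/γ₂))
      volume 0 t := by
    apply ContinuousOn.intervalIntegrable
    apply (g_contOn n hn1 γ₂ r p hcont hmem).mono
    rw [Set.uIcc_of_le ht0]
    exact fun s hs => hs.1
  -- abbreviations
  set A₁ := ∫ s in Set.Ioc (0:ℝ) t, Real.exp (-r * s) * beta n γ₁ (p s) ^ (1/γ₁) with hA1def
  set A₂ := ∫ s in Set.Ioc (0:ℝ) t, Real.exp (-r * s) * beta n γ₂ (p s) ^ (1/γ₂) with hA2def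
  set B₁ := ∫ s in Set.Ioi t, Real.exp (-r * s) * beta n γ₁ (p s) ^ (1/γ₁) with hB1def
  set B₂ := ∫ s in Set.Ioi t, Real.exp (-r * s) * beta n γ₂ (p s) ^ (1/γ₂) with hB2def
  -- positivity
  have hA1pos : 0 < A₁ := by
    rw [hA1def, ← intervalIntegral.integral_of_le ht0]
    exact intervalIntegral.intervalIntegral_pos_of_pos_on hii1
      (fun s hs => g_pos n hn1 γ₁ r p hmem hs.1.le) ht
  have hA2pos : 0 < A₂ := by
    rw [hA2def, ← intervalIntegral.integral_of_le ht0]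
    exact intervalIntegral.intervalIntegral_pos_of_pos_on hii2
      (fun s hs => g_pos n hn1 γ₂ r p hmem hs.1.le) ht
  have hB1pos : 0 < B₁ :=
    intOn_pos t hint1t (fun s hs => g_pos n hn1 γ₁ r p hmem (ht0.trans (le_of_lt hs)))
  have hB2pos : 0 < B₂ :=
    intOn_pos t hint2t (fun s hs => g_pos n hn1 γ₂ r p hmem (ht0.trans (le_of_lt hs)))
  -- splits
  have hsplit1 : (∫ s in Set.Ioi (0:ℝ), Real.exp (-r * s) * beta n γ₁ (p s) ^ (1/γ₁))
      = A₁ + B₁ := by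
    rw [← Set.Ioc_union_Ioi_eq_Ioi ht0,
      setIntegral_union (Set.Ioc_disjoint_Ioi le_rfl) measurableSet_Ioi hint1c hint1t]
  have hsplit2 : (∫ s in Set.Ioi (0:ℝ), Real.exp (-r * s) * beta n γ₂ (p s) ^ (1/γ₂))
      = A₂ + B₂ := by
    rw [← Set.Ioc_union_Ioi_eq_Ioi ht0,
      setIntegral_union (Set.Ioc_disjoint_Ioi le_rfl) measurableSet_Ioi hint2c hint2t]
  -- strict comparison on (0,t)
  have hAlt : c₂ * A₁ < c₁ * A₂ := by
    have h0 : 0 < ∫ s in (0:ℝ)..t,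
        (c₁ * (Real.exp (-r * s) * beta n γ₂ (p s) ^ (1/γ₂))
          - c₂ * (Real.exp (-r * s) * beta n γ₁ (p s) ^ (1/γ₁))) := by
      apply intervalIntegral.intervalIntegral_pos_of_pos_on
        ((hii2.const_mul c₁).sub (hii1.const_mul c₂))
      · intro s hs
        have hs0 : (0:ℝ) ≤ s := hs.1.le
        have hx := hmem s hs0
        have hx1 : p s < 1 := by
          have := hanti Set.self_mem_Ici (Set.mem_Ici.mpr hs0) hs.1
          rwa [hp0] at this
        have hyx : p t < p s := hanti (Set.mem_Ici.mpr hs0) (Set.mem_Ici.mpr ht0) hs.2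
        have hcr := cross n hn γ₁ γ₂ hγ₂ hγ₂1 hγ₁ hne hpt.1 hyx hx1
        have hexp : (0:ℝ) < Real.exp (-r * s) := Real.exp_pos _
        rw [hc1def, hc2def]
        nlinarith [hcr, hexp]
      · exact ht
    rw [intervalIntegral.integral_sub (hii2.const_mul c₁) (hii1.const_mul c₂),
      intervalIntegral.integral_const_mul, intervalIntegral.integral_const_mul,
      intervalIntegral.integral_of_le ht0, intervalIntegral.integral_of_le ht0] at h0
    rw [hA1def, hA2def]
    linarith
  -- weak comparison on (t,∞)
  have hBle : c₁ * B₂ ≤ c₂ * B₁ := by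
    rw [hB1def, hB2def, ← integral_const_mul, ← integral_const_mul]
    apply setIntegral_mono_on (hint2t.const_mul c₁) (hint1t.const_mul c₂) measurableSet_Ioi
    intro s hs
    have hs0 : (0:ℝ) ≤ s := ht0.trans (le_of_lt hs)
    have hx := hmem s hs0
    have hxy : p s < p t := hanti (Set.mem_Ici.mpr ht0) (Set.mem_Ici.mpr hs0) hs
    have hcr := cross n hn γ₁ γ₂ hγ₂ hγ₂1 hγ₁ hne hx.1 hxy hpt1
    have hexp : (0:ℝ) < Real.exp (-r * s) := Real.exp_pos _
    rw [hc1def, hc2def]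
    nlinarith [hcr, hexp]
  -- final assembly
  rw [Delta_eq n γ₁ r p ht0, Delta_eq n γ₂ r p ht0, hsplit1, hsplit2,
    div_lt_div_iff₀ (by linarith) (by linarith)]
  have hfin : A₁ * B₂ < A₂ * B₁ := by
    have e1 : c₂ * (A₁ * B₂) < c₁ * A₂ * B₂ := by nlinarith [mul_lt_mul_of_pos_right hAlt hB2pos]
    have e2 : c₁ * A₂ * B₂ ≤ c₂ * (A₂ * B₁) := by
      nlinarith [mul_le_mul_of_nonneg_left hBle hA2pos.le]
    exact lt_of_mul_lt_mul_left (lt_of_lt_of_le e1 e2) hc2.le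
  nlinarith [hfin, hA1pos, hA2pos]
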